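/- For integers k ≤ p ≤ q, one has C(p,k)·C(q,k) > C(p-1,k)·C(q+1,k), where C(m,k) denotes the binomial coefficient. -/
import Mathlib

theorem stmt_14 (k p q : ℕ) (hk : 1 ≤ k) (hkp : k ≤ p) (hpq : p ≤ q) :
    (p - 1).choose k * (q + 1).choose k < p.choose k * q.choose k := by
  have hp : 1 ≤ p := hk.trans hkp
  have hkq : k ≤ q := hkp.trans hpq
  have h1 : (p - 1).choose k * p = p.choose k * (p - k) := by
    have := Nat.choose_mul_succ_eq (p - 1) k
    have e : p - 1 + 1 = p := by omega
    rwa [e] at this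
  have h2 : q.choose k * (q + 1) = (q + 1).choose k * (q + 1 - k) := by
    exact Nat.choose_mul_succ_eq q k
  have hA : 0 < p.choose k := Nat.choose_pos hkp
  have hB : 0 < q.choose k := Nat.choose_pos hkq
  -- key arithmetic inequality
  have key : (p - k) * (q + 1) < p * (q + 1 - k) := by
    obtain ⟨a, rfl⟩ := Nat.exists_eq_add_of_le hkp
    have hb : k ≤ q + 1 := hkq.trans (Nat.le_succ q)
    obtain ⟨b, hqb⟩ := Nat.exists_eq_add_of_le hb
    have hab : a < b := by omega
    have : k + a - k = a := by omega
    rw [this, hqb]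
    have : k + b - k = b := by omega
    rw [this]
    nlinarith
  have hpos : 0 < p * (q + 1 - k) := by
    have : 0 < q + 1 - k := by omega
    positivity
  apply Nat.lt_of_mul_lt_mul_left (a := p * (q + 1 - k))
  calc p * (q + 1 - k) * ((p - 1).choose k * (q + 1).choose k)
      = ((p - 1).choose k * p) * ((q + 1).choose k * (q + 1 - k)) := by ring
    _ = (p.choose k * (p - k)) * (q.choose k * (q + 1)) := by rw [h1, ← h2]
    _ = (p.choose k * q.choose k) * ((p - k) * (q + 1)) := by ring
    _ < (p.choose k * q.choose k) * (p * (q + 1 - k)) := by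
        have hAB : 0 < p.choose k * q.choose k := Nat.mul_pos hA hB
        exact Nat.mul_lt_mul_of_pos_left key hAB
    _ = p * (q + 1 - k) * (p.choose k * q.choose k) := by ring
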